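/- Let k ≥ 3 and t ≥ k³ be integers, G a group, and ξ: Pol(K_k, K_t) → Pol(ℤ, G) a minion homomorphism. Then any two ternary polymorphisms f, g ∈ Pol(K_k, K_t) of the same type (i.e., with f(x, x, x) = g(x, x, x) for all x ∈ [k]) have the same image under ξ, i.e., ξ(f) = ξ(g). -/

import Mathlib

/-- `f : [k]ⁿ → [t]` is a polymorphism of the pair of complete graphs
`(K_k, K_t)` (with the binary disequality relation): it maps tuples that are
coordinatewise distinct to distinct values. -/
def IsCliquePoly (k t : ℕ) {n : ℕ} (f : (Fin n → Fin k) → Fin t) : Prop :=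
  ∀ x y : Fin n → Fin k, (∀ j, x j ≠ y j) → f x ≠ f y

/-- The minor map `Fin 4 → Fin 3` fixing the first three coordinates and
sending the last one to `m`. -/
def pim (m : Fin 3) (l : Fin 4) : Fin 3 := if h : (l : ℕ) < 3 then ⟨l, h⟩ else m

lemma pim_castSucc (m : Fin 3) (l : Fin 3) : pim m (Fin.castSucc l) = l := by
  have h : ((Fin.castSucc l : Fin 4) : ℕ) < 3 := by simpa using l.isLt
  simp only [pim, dif_pos h]
  ext
  simp

lemma pim_three (m : Fin 3) : pim m 3 = m := by
  simp only [pim]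
  exact dif_neg (by decide)

lemma fin4_eq_three {l : Fin 4} (h : ¬ (l : ℕ) < 3) : l = 3 := by
  have h4 := l.isLt
  have h3 : ((3 : Fin 4) : ℕ) = 3 := rfl
  exact Fin.ext (by omega)

/-- The auxiliary vector `(0,0,0,n) : ℤ⁴`. -/
def E4 (n : ℤ) (l : Fin 4) : ℤ := if l = 3 then n else 0

lemma E4_add (p q : ℤ) : (E4 (p + q)) = E4 p + E4 q := by
  funext l
  by_cases h : l = 3 <;> simp [E4, h]

lemma E4_zero : E4 0 = 0 := by
  funext l; simp [E4]

lemma pim_vec (x : Fin 3 → ℤ) (m m' : Fin 3) :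
    (fun l => x (pim m l)) = (fun l => x (pim m' l)) + E4 (x m - x m') := by
  funext l
  by_cases h : (l : ℕ) < 3
  · have hl3 : l ≠ 3 := fun he => absurd (he ▸ h) (by decide)
    simp [pim, dif_pos h, E4, hl3, Pi.add_apply]
  · have hl3 : l = 3 := fin4_eq_three h
    subst hl3
    rw [Pi.add_apply, pim_three, pim_three,
      show E4 (x m - x m') 3 = x m - x m' from if_pos rfl]
    ring

/-- Key step: two ternary polymorphisms differing in at most one non-constant
point have the same image under a minion homomorphism into `Pol(ℤ, G)`. -/
theorem step_lemma {k t : ℕ} {G : Type*} [Group G]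
    (ξ : ∀ n : ℕ, {f : (Fin n → Fin k) → Fin t // IsCliquePoly k t f} →
        ((Fin n → ℤ) → G))
    (hhom : ∀ n f, ∀ x y : Fin n → ℤ, ξ n f (x + y) = ξ n f x * ξ n f y)
    (hminor : ∀ (n n' : ℕ) (π : Fin n → Fin n')
        (f : {f : (Fin n → Fin k) → Fin t // IsCliquePoly k t f})
        (g : {g : (Fin n' → Fin k) → Fin t // IsCliquePoly k t g}),
        (∀ x, g.1 x = f.1 (fun j => x (π j))) →
        ∀ x, ξ n' g x = ξ n f (fun j => x (π j)))
    (f f' : {f : (Fin 3 → Fin k) → Fin t // IsCliquePoly k t f})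
    (a : Fin 3 → Fin k) (i j j' : Fin 3)
    (hij : a i ≠ a j) (hij' : a i ≠ a j') (hjj' : j ≠ j')
    (hdiff : ∀ x, x ≠ a → f.1 x = f'.1 x) :
    ξ 3 f = ξ 3 f' := by
  classical
  -- values of f and f' at coordinatewise-distinct points never collide
  have key : ∀ u v : Fin 3 → Fin k, (∀ l, u l ≠ v l) →
      ∀ p q : Fin t, (p = f.1 u ∨ p = f'.1 u) → (q = f.1 v ∨ q = f'.1 v) → p ≠ q := by
    intro u v huv p q hp hq
    have hfu : f.1 u ≠ f.1 v := f.2 u v huv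
    have hfu' : f'.1 u ≠ f'.1 v := f'.2 u v huv
    by_cases hu : u = a
    · have hv : v ≠ a := fun hv => (huv 0) (by rw [hu, hv])
      have hveq : f.1 v = f'.1 v := hdiff v hv
      rcases hp with rfl | rfl <;> rcases hq with rfl | rfl
      · exact hfu
      · rw [← hveq]; exact hfu
      · rw [hveq]; exact hfu'
      · exact hfu'
    · have hueq : f.1 u = f'.1 u := hdiff u hu
      rcases hp with rfl | rfl <;> rcases hq with rfl | rfl
      · exact hfu
      · rw [hueq]; exact hfu'
      · rw [← hueq]; exact hfu
      · exact hfu'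
  -- the 4-ary polymorphism interpolating between f and f'
  have hHpoly : IsCliquePoly k t (fun y : Fin 4 → Fin k =>
      if y 3 = y (Fin.castSucc i) then f'.1 (fun l => y (Fin.castSucc l))
      else f.1 (fun l => y (Fin.castSucc l))) := by
    intro y z hyz
    have h3 : ∀ l, (fun l => y (Fin.castSucc l)) l ≠ (fun l => z (Fin.castSucc l)) l :=
      fun l => hyz _
    refine key _ _ h3 _ _ ?_ ?_
    · by_cases h : y 3 = y (Fin.castSucc i)
      · exact Or.inr (if_pos h)
      · exact Or.inl (if_neg h)
    · by_cases h : z 3 = z (Fin.castSucc i)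
      · exact Or.inr (if_pos h)
      · exact Or.inl (if_neg h)
  set HH : {f : (Fin 4 → Fin k) → Fin t // IsCliquePoly k t f} := ⟨_, hHpoly⟩ with hHH
  -- evaluation of the minors of HH
  have heval : ∀ (m : Fin 3) (x : Fin 3 → Fin k),
      HH.1 (fun l => x (pim m l)) = if x m = x i then f'.1 x else f.1 x := by
    intro m x
    show (if (fun l => x (pim m l)) 3 = (fun l => x (pim m l)) (Fin.castSucc i)
        then f'.1 (fun l => x (pim m (Fin.castSucc l)))
        else f.1 (fun l => x (pim m (Fin.castSucc l)))) = _
    simp only [pim_three, pim_castSucc]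
  have hminf : ∀ m : Fin 3, a i ≠ a m → ∀ x, f.1 x = HH.1 (fun l => x (pim m l)) := by
    intro m hm x
    rw [heval]
    split
    · next h =>
      refine hdiff x fun hxa => ?_
      rw [hxa] at h
      exact hm h.symm
    · rfl
  have hminf' : ∀ x, f'.1 x = HH.1 (fun l => x (pim i l)) := by
    intro x
    rw [heval]
    exact (if_pos rfl).symm
  have hA := hminor 4 3 (pim j) HH f (hminf j hij)
  have hB := hminor 4 3 (pim j') HH f (hminf j' hij')
  have hC := hminor 4 3 (pim i) HH f' hminf'
  set φ : (Fin 4 → ℤ) → G := ξ 4 HH with hφ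
  have hφadd : ∀ u v : Fin 4 → ℤ, φ (u + v) = φ u * φ v := hhom 4 HH
  have hφ0 : φ 0 = 1 := by
    have h := hφadd 0 0
    rw [add_zero] at h
    exact (left_eq_mul.mp h)
  have hE1 : φ (E4 1) = 1 := by
    set x0 : Fin 3 → ℤ := fun m => if m = j then 1 else 0 with hx0
    have h1 : (fun l => x0 (pim j l)) = (fun l => x0 (pim j' l)) + E4 1 := by
      have := pim_vec x0 j j'
      rwa [show x0 j - x0 j' = 1 by simp [hx0, Ne.symm hjj']] at this
    have h2 : φ (fun l => x0 (pim j l)) = φ (fun l => x0 (pim j' l)) :=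
      (hA x0).symm.trans (hB x0)
    rw [h1, hφadd] at h2
    exact left_eq_mul.mp h2.symm
  have hEn : ∀ n : ℤ, φ (E4 n) = 1 := by
    intro n
    induction n using Int.induction_on with
    | zero => rw [E4_zero]; exact hφ0
    | succ m ihm => rw [show ((m : ℤ) + 1) = m + 1 from rfl, E4_add, hφadd, ihm, hE1, one_mul]
    | pred m ihm =>
      have h : φ (E4 (-(m : ℤ) - 1)) * φ (E4 1) = φ (E4 (-(m : ℤ))) := by
        rw [← hφadd, ← E4_add]; norm_num
      rw [hE1, mul_one, ihm] at h
      exact h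
  funext x
  calc ξ 3 f x = φ (fun l => x (pim j l)) := hA x
    _ = φ ((fun l => x (pim i l)) + E4 (x j - x i)) := by rw [← pim_vec]
    _ = φ (fun l => x (pim i l)) * φ (E4 (x j - x i)) := hφadd _ _
    _ = φ (fun l => x (pim i l)) := by rw [hEn, mul_one]
    _ = ξ 3 f' x := (hC x).symm

/-- Updating a polymorphism at one point with a fresh value yields a polymorphism. -/
lemma update_poly {k t : ℕ} (f : (Fin 3 → Fin k) → Fin t)
    (hf : IsCliquePoly k t f) (a : Fin 3 → Fin k) (c : Fin t)
    (hc : ∀ y, (∀ l, y l ≠ a l) → c ≠ f y) :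
    IsCliquePoly k t (Function.update f a c) := by
  intro x y hxy
  by_cases hx : x = a
  · by_cases hy : y = a
    · exact absurd (by rw [hx, hy]) (hxy 0)
    · rw [hx, Function.update_self, Function.update_of_ne hy]
      exact hc y fun l => by rw [← hx]; exact (hxy l).symm
  · rw [Function.update_of_ne hx]
    by_cases hy : y = a
    · rw [hy, Function.update_self]
      exact fun h => hc x (fun l => by rw [← hy]; exact hxy l) h.symm
    · rw [Function.update_of_ne hy]; exact hf x y hxy

/-- The number of neighbours of a point in the coordinatewise-distinctness graph. -/
lemma card_adj {k : ℕ} (b : Fin 3 → Fin k) :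
    (Finset.univ.filter fun x : Fin 3 → Fin k => ∀ l, x l ≠ b l).card = (k - 1) ^ 3 := by
  classical
  rw [← Fintype.card_subtype]
  rw [Fintype.card_congr (Equiv.subtypePiEquivPi (p := fun l v => v ≠ b l))]
  rw [Fintype.card_pi]
  have h : ∀ l : Fin 3, Fintype.card {v : Fin k // v ≠ b l} = k - 1 := by
    intro l
    have h2 : Fintype.card {x : Fin k // ¬ x = b l} =
        Fintype.card (Fin k) - Fintype.card {x : Fin k // x = b l} :=
      Fintype.card_subtype_compl _
    simpa [Fintype.card_subtype_eq] using h2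
  simp [h]

/-- From a non-constant triple, extract the index pattern needed for `step_lemma`. -/
lemma exists_indices {k : ℕ} (a : Fin 3 → Fin k) (h : a ≠ fun _ => a 0) :
    ∃ i j j' : Fin 3, a i ≠ a j ∧ a i ≠ a j' ∧ j ≠ j' := by
  by_cases h01 : a 0 = a 1
  · have h02 : a 0 ≠ a 2 := by
      intro h02
      apply h
      funext l
      fin_cases l
      · rfl
      · exact h01.symm
      · exact h02.symm
    exact ⟨2, 0, 1, Ne.symm h02, fun e => h02 (h01.trans e.symm), by decide⟩
  · by_cases h02 : a 0 = a 2
    · exact ⟨1, 0, 2, fun e => h01 e.symm, fun e => h01 (h02.trans e.symm), by decide⟩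
    · exact ⟨0, 1, 2, h01, h02, by decide⟩

lemma arith_bound {k t : ℕ} (hk : 3 ≤ k) (ht : k ^ 3 ≤ t) : (k - 1) ^ 3 + 2 < t := by
  obtain ⟨m, rfl⟩ : ∃ m, k = m + 3 := ⟨k - 3, by omega⟩
  have h : (m + 3 - 1) ^ 3 + 2 < (m + 3) ^ 3 := by
    have : m + 3 - 1 = m + 2 := by omega
    rw [this]
    nlinarith [sq_nonneg m, m.zero_le]
  omega

/-- Connectivity argument: a ternary polymorphism can be transformed into any
other one of the same type by recolourings at single non-constant points. -/
lemma conn {k t : ℕ} (hk : 3 ≤ k) (ht : k ^ 3 ≤ t) {G : Type*} [Group G]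
    (ξ : ∀ n : ℕ, {f : (Fin n → Fin k) → Fin t // IsCliquePoly k t f} →
        ((Fin n → ℤ) → G))
    (hhom : ∀ n f, ∀ x y : Fin n → ℤ, ξ n f (x + y) = ξ n f x * ξ n f y)
    (hminor : ∀ (n n' : ℕ) (π : Fin n → Fin n')
        (f : {f : (Fin n → Fin k) → Fin t // IsCliquePoly k t f})
        (g : {g : (Fin n' → Fin k) → Fin t // IsCliquePoly k t g}),
        (∀ x, g.1 x = f.1 (fun j => x (π j))) →
        ∀ x, ξ n' g x = ξ n f (fun j => x (π j)))
    (g : {f : (Fin 3 → Fin k) → Fin t // IsCliquePoly k t f}) :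
    ∀ n : ℕ, ∀ f : {f : (Fin 3 → Fin k) → Fin t // IsCliquePoly k t f},
      (∀ c : Fin k, f.1 (fun _ => c) = g.1 (fun _ => c)) →
      (Finset.univ.filter fun x => f.1 x ≠ g.1 x).card ≤ n →
      ξ 3 f = ξ 3 g := by
  classical
  intro n
  induction n with
  | zero =>
    intro f hconst hcard
    have hfg : f = g := by
      refine Subtype.ext (funext fun x => ?_)
      by_contra hx
      have hmem : x ∈ Finset.univ.filter (fun x => f.1 x ≠ g.1 x) := by
        simp [hx]
      have := Finset.card_pos.mpr ⟨x, hmem⟩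
      omega
    rw [hfg]
  | succ n ih =>
    intro f hconst hcard
    by_cases hfg : ∀ x, f.1 x = g.1 x
    · rw [Subtype.ext (funext hfg)]
    · push_neg at hfg
      obtain ⟨a, ha0⟩ := hfg
      -- Case A: if no neighbour of `a` carries the colour `g a`, recolour `a`.
      have caseA : ∀ f' : {f : (Fin 3 → Fin k) → Fin t // IsCliquePoly k t f},
          (∀ c : Fin k, f'.1 (fun _ => c) = g.1 (fun _ => c)) →
          f'.1 a ≠ g.1 a →
          (Finset.univ.filter fun x => f'.1 x ≠ g.1 x).card ≤ n + 1 →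
          (∀ b, (∀ l, b l ≠ a l) → f'.1 b ≠ g.1 a) →
          ξ 3 f' = ξ 3 g := by
        intro f' hconst' ha hcard' hempty
        have hanc : a ≠ fun _ => a 0 := by
          intro he
          apply ha
          calc f'.1 a = f'.1 (fun _ => a 0) := by rw [← he]
            _ = g.1 (fun _ => a 0) := hconst' (a 0)
            _ = g.1 a := by rw [← he]
        obtain ⟨i, j, j', hij, hij', hjj'⟩ := exists_indices a hanc
        have hf2poly : IsCliquePoly k t (Function.update f'.1 a (g.1 a)) :=
          update_poly f'.1 f'.2 a (g.1 a) (fun y hy => (hempty y hy).symm)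
        have hstep : ξ 3 f' = ξ 3 ⟨Function.update f'.1 a (g.1 a), hf2poly⟩ :=
          step_lemma ξ hhom hminor f' ⟨Function.update f'.1 a (g.1 a), hf2poly⟩
            a i j j' hij hij' hjj'
            (fun x hx => (Function.update_of_ne hx _ _).symm)
        have hconstne : ∀ c : Fin k, (fun _ => c : Fin 3 → Fin k) ≠ a := fun c he =>
          hanc (funext fun l => (congrFun he.symm l).trans (congrFun he.symm 0).symm)
        have hconst2 : ∀ c : Fin k,
            Function.update f'.1 a (g.1 a) (fun _ => c) = g.1 (fun _ => c) := by
          intro c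
          rw [Function.update_of_ne (hconstne c)]
          exact hconst' c
        have hcard2 :
            (Finset.univ.filter fun x => Function.update f'.1 a (g.1 a) x ≠ g.1 x).card ≤ n := by
          have hsub : (Finset.univ.filter fun x => Function.update f'.1 a (g.1 a) x ≠ g.1 x) ⊆
              (Finset.univ.filter fun x => f'.1 x ≠ g.1 x).erase a := by
            intro x hx
            simp only [Finset.mem_filter] at hx
            by_cases hxa : x = a
            · exfalso
              apply hx.2
              rw [hxa, Function.update_self]
            · refine Finset.mem_erase.mpr ⟨hxa, Finset.mem_filter.mpr ⟨Finset.mem_univ _, ?_⟩⟩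
              have := hx.2
              rwa [Function.update_of_ne hxa] at this
          have hmema : a ∈ Finset.univ.filter fun x => f'.1 x ≠ g.1 x := by simp [ha]
          have h1 := Finset.card_le_card hsub
          rw [Finset.card_erase_of_mem hmema] at h1
          omega
        rw [hstep]
        exact ih ⟨Function.update f'.1 a (g.1 a), hf2poly⟩ hconst2 hcard2
      -- Inner induction on the number of neighbours of `a` coloured `g a`.
      have inner : ∀ m : ℕ, ∀ f' : {f : (Fin 3 → Fin k) → Fin t // IsCliquePoly k t f},
          (∀ c : Fin k, f'.1 (fun _ => c) = g.1 (fun _ => c)) →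
          f'.1 a ≠ g.1 a →
          (Finset.univ.filter fun x => f'.1 x ≠ g.1 x).card ≤ n + 1 →
          (Finset.univ.filter fun x => (∀ l, x l ≠ a l) ∧ f'.1 x = g.1 a).card ≤ m →
          ξ 3 f' = ξ 3 g := by
        intro m
        induction m with
        | zero =>
          intro f' hconst' ha' hcard' hbad
          refine caseA f' hconst' ha' hcard' ?_
          intro b hb he
          have hmem : b ∈ Finset.univ.filter
              fun x => (∀ l, x l ≠ a l) ∧ f'.1 x = g.1 a := by
            simp [hb, he]
          have hpos : 0 < (Finset.univ.filter
              fun x => (∀ l, x l ≠ a l) ∧ f'.1 x = g.1 a).card :=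
            Finset.card_pos.mpr ⟨b, hmem⟩
          exact absurd (lt_of_lt_of_le hpos hbad) (lt_irrefl 0)
        | succ m ihm =>
          intro f' hconst' ha' hcard' hbad
          by_cases hemp : ∀ b, (∀ l, b l ≠ a l) → f'.1 b ≠ g.1 a
          · exact caseA f' hconst' ha' hcard' hemp
          · push_neg at hemp
            obtain ⟨b, hb1, hb2⟩ := hemp
            have hba : b ≠ a := fun e => hb1 0 (by rw [e])
            have hgb : g.1 b ≠ g.1 a := g.2 b a hb1
            have hbnc : b ≠ fun _ => b 0 := by
              intro he
              apply hgb
              have h1 : f'.1 b = g.1 b := by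
                conv_lhs => rw [he]
                conv_rhs => rw [he]
                exact hconst' (b 0)
              rw [← h1]
              exact hb2
            -- choose a fresh colour for b
            have hScard :
                (((Finset.univ.filter fun x : Fin 3 → Fin k => ∀ l, x l ≠ b l).image f'.1) ∪
                  {f'.1 b, g.1 a}).card < t := by
              have h1 := Finset.card_union_le
                ((Finset.univ.filter fun x : Fin 3 → Fin k => ∀ l, x l ≠ b l).image f'.1)
                ({f'.1 b, g.1 a} : Finset (Fin t))
              have h2 : ((Finset.univ.filter
                  fun x : Fin 3 → Fin k => ∀ l, x l ≠ b l).image f'.1).card ≤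
                  (Finset.univ.filter fun x : Fin 3 → Fin k => ∀ l, x l ≠ b l).card :=
                Finset.card_image_le
              rw [card_adj] at h2
              have h3 : ({f'.1 b, g.1 a} : Finset (Fin t)).card ≤ 2 :=
                le_trans (Finset.card_insert_le _ _) (by simp)
              have h4 := arith_bound hk ht
              exact lt_of_le_of_lt (h1.trans (Nat.add_le_add h2 h3)) h4
            obtain ⟨c, hc⟩ : ∃ c : Fin t,
                c ∉ (((Finset.univ.filter fun x : Fin 3 → Fin k => ∀ l, x l ≠ b l).image f'.1) ∪
                  {f'.1 b, g.1 a}) := by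
              by_contra hcon
              push_neg at hcon
              have hsub : (Finset.univ : Finset (Fin t)) ⊆
                  (((Finset.univ.filter fun x : Fin 3 → Fin k => ∀ l, x l ≠ b l).image f'.1) ∪
                    {f'.1 b, g.1 a}) := fun c _ => hcon c
              have hle := Finset.card_le_card hsub
              rw [Finset.card_univ, Fintype.card_fin] at hle
              exact absurd hScard (not_lt.mpr hle)
            have hcim : ∀ y, (∀ l, y l ≠ b l) → c ≠ f'.1 y := by
              intro y hy he
              exact hc (Finset.mem_union_left _ (Finset.mem_image.mpr
                ⟨y, Finset.mem_filter.mpr ⟨Finset.mem_univ _, hy⟩, he.symm⟩))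
            have hcb : c ≠ f'.1 b := fun e => hc (Finset.mem_union_right _ (by simp [e]))
            have hcga : c ≠ g.1 a := fun e => hc (Finset.mem_union_right _ (by simp [e]))
            have hf2poly := update_poly f'.1 f'.2 b c hcim
            obtain ⟨i, j, j', hij, hij', hjj'⟩ := exists_indices b hbnc
            have hstep : ξ 3 f' = ξ 3 ⟨Function.update f'.1 b c, hf2poly⟩ :=
              step_lemma ξ hhom hminor f' ⟨Function.update f'.1 b c, hf2poly⟩
                b i j j' hij hij' hjj'
                (fun x hx => (Function.update_of_ne hx _ _).symm)
            rw [hstep]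
            refine ihm ⟨Function.update f'.1 b c, hf2poly⟩ ?_ ?_ ?_ ?_
            · intro cc
              have hne : (fun _ => cc : Fin 3 → Fin k) ≠ b := fun he =>
                hbnc (funext fun l => (congrFun he.symm l).trans (congrFun he.symm 0).symm)
              show Function.update f'.1 b c (fun _ => cc) = _
              rw [Function.update_of_ne hne]
              exact hconst' cc
            · show Function.update f'.1 b c a ≠ g.1 a
              rw [Function.update_of_ne (Ne.symm hba)]
              exact ha'
            · refine le_trans (Finset.card_le_card ?_) hcard'
              intro x hx
              simp only [Finset.mem_filter] at hx ⊢
              refine ⟨Finset.mem_univ _, ?_⟩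
              by_cases hxb : x = b
              · rw [hxb, hb2]
                exact Ne.symm hgb
              · have := hx.2
                rwa [Function.update_of_ne hxb] at this
            · have hsub : (Finset.univ.filter
                  fun x => (∀ l, x l ≠ a l) ∧ Function.update f'.1 b c x = g.1 a) ⊆
                  (Finset.univ.filter fun x => (∀ l, x l ≠ a l) ∧ f'.1 x = g.1 a).erase b := by
                intro x hx
                simp only [Finset.mem_filter] at hx
                by_cases hxb : x = b
                · exfalso
                  apply hcga
                  have := hx.2.2
                  rw [hxb, Function.update_self] at this
                  exact this
                · refine Finset.mem_erase.mpr
                    ⟨hxb, Finset.mem_filter.mpr ⟨Finset.mem_univ _, hx.2.1, ?_⟩⟩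
                  have := hx.2.2
                  rwa [Function.update_of_ne hxb] at this
              have hmemb : b ∈ Finset.univ.filter
                  fun x => (∀ l, x l ≠ a l) ∧ f'.1 x = g.1 a := by
                simp [hb1, hb2]
              have h1 := Finset.card_le_card hsub
              rw [Finset.card_erase_of_mem hmemb] at h1
              exact le_trans h1 (le_trans (Nat.sub_le_sub_right hbad 1)
                (le_of_eq (Nat.succ_sub_one m)))
      exact inner
        (Finset.univ.filter fun x => (∀ l, x l ≠ a l) ∧ f.1 x = g.1 a).card
        f hconst ha0 hcard le_rfl

/-- for `k ≥ 3`, `t ≥ k³`, a group `G` and a minion homomorphism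
`ξ : Pol(K_k, K_t) → Pol(ℤ, G)`, any two ternary polymorphisms of the same type
(equal on constant tuples) have the same image under `ξ`. -/
theorem minion_hom_eq_on_ternary_of_same_type (k t : ℕ) (hk : 3 ≤ k)
    (ht : k ^ 3 ≤ t) {G : Type*} [Group G]
    (ξ : ∀ n : ℕ, {f : (Fin n → Fin k) → Fin t // IsCliquePoly k t f} →
        ((Fin n → ℤ) → G))
    (hhom : ∀ n f, ∀ x y : Fin n → ℤ, ξ n f (x + y) = ξ n f x * ξ n f y)
    (hminor : ∀ (n n' : ℕ) (π : Fin n → Fin n')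
        (f : {f : (Fin n → Fin k) → Fin t // IsCliquePoly k t f})
        (g : {g : (Fin n' → Fin k) → Fin t // IsCliquePoly k t g}),
        (∀ x, g.1 x = f.1 (fun j => x (π j))) →
        ∀ x, ξ n' g x = ξ n f (fun j => x (π j)))
    (f g : {f : (Fin 3 → Fin k) → Fin t // IsCliquePoly k t f})
    (htype : ∀ x : Fin k, f.1 (fun _ => x) = g.1 (fun _ => x)) :
    ξ 3 f = ξ 3 g := by
  classical
  exact conn hk ht ξ hhom hminor g
    (Finset.univ.filter fun x => f.1 x ≠ g.1 x).card f htype le_rfl
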